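/- For any integers t ≥ 0 and c ≥ 0, there exists a latin cube of order t + c containing a subcube of order c if and only if t ≥ c (interpreting the case c = 0 or c = t + c trivially as true). -/

import Mathlib

def IsLatinCube {n : ℕ} (C : Fin n → Fin n → Fin n → Fin n) : Prop :=
  (∀ i j, Function.Bijective fun k => C i j k) ∧
  (∀ i k, Function.Bijective fun j => C i j k) ∧
  (∀ j k, Function.Bijective fun i => C i j k)


namespace CubeAux

/-- doubling-ish permutation of `Fin t` -/
def phi (t : ℕ) (e : Fin t) : Fin t :=
  if h : 2 * e.val < t then ⟨2 * e.val, h⟩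
  else ⟨2 * e.val - t + (1 - t % 2), by have := e.isLt; omega⟩

lemma phi_val (t : ℕ) (e : Fin t) :
    (phi t e).val = if 2 * e.val < t then 2 * e.val else 2 * e.val - t + (1 - t % 2) := by
  unfold phi; split <;> rfl

lemma phi_inj (t : ℕ) : Function.Injective (phi t) := by
  intro a b hab
  have h := congrArg Fin.val hab
  rw [phi_val, phi_val] at h
  have := a.isLt; have := b.isLt
  apply Fin.ext
  split_ifs at h <;> omega

def psi (t : ℕ) (e : Fin t) : Fin t := phi t e - e

lemma psi_val (t : ℕ) (e : Fin t) (he : e.val + 1 < t) :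
    (psi t e).val = if 2 * e.val < t then e.val else e.val + (1 - t % 2) := by
  have h1 : (psi t e).val = (t - e.val + (phi t e).val) % t := by
    unfold psi; rw [Fin.sub_def]
  have hp := phi_val t e
  have hlt := e.isLt
  split_ifs with h2
  · rw [h1, hp, if_pos h2]
    have h3 : t - e.val + 2 * e.val = t + e.val := by omega
    rw [h3, Nat.add_mod_left, Nat.mod_eq_of_lt hlt]
  · rw [h1, hp, if_neg h2]
    have h3 : t - e.val + (2 * e.val - t + (1 - t % 2)) = e.val + (1 - t % 2) := by omega
    rw [h3, Nat.mod_eq_of_lt (by omega)]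

lemma psi_inj (t c : ℕ) (hc : 0 < c) (hct : c ≤ t) (e1 e2 : Fin t)
    (h1 : e1.val < t - c) (h2 : e2.val < t - c) (h : psi t e1 = psi t e2) : e1 = e2 := by
  have v1 := psi_val t e1 (by omega)
  have v2 := psi_val t e2 (by omega)
  have h := congrArg Fin.val h
  rw [v1, v2] at h
  apply Fin.ext
  split_ifs at h <;> omega

/-- embedding for the top-right block -/
def hemb (t c : ℕ) (ht : 0 < t) (hct : c ≤ t) (u : Fin c) : Fin t :=
  if t % 2 = 0 ∧ t < 2 * (t - c) ∧ u.val = 0 then ⟨t / 2, by omega⟩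
  else ⟨(t - c) + u.val, by have := u.isLt; omega⟩

lemma hemb_val (t c : ℕ) (ht : 0 < t) (hct : c ≤ t) (u : Fin c) :
    (hemb t c ht hct u).val =
      if t % 2 = 0 ∧ t < 2 * (t - c) ∧ u.val = 0 then t / 2 else (t - c) + u.val := by
  unfold hemb; split <;> rfl

lemma hemb_inj (t c : ℕ) (ht : 0 < t) (hct : c ≤ t) :
    Function.Injective (hemb t c ht hct) := by
  intro a b hab
  have h := congrArg Fin.val hab
  rw [hemb_val, hemb_val] at h
  apply Fin.ext
  split_ifs at h with h1 h2 h2 <;> omega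

lemma hemb_ne_psi (t c : ℕ) (hc : 0 < c) (ht : 0 < t) (hct : c ≤ t) (u : Fin c) (e : Fin t)
    (he : e.val < t - c) : hemb t c ht hct u ≠ psi t e := by
  intro h
  have h := congrArg Fin.val h
  rw [hemb_val, psi_val t e (by omega)] at h
  have := u.isLt
  split_ifs at h <;> omega

end CubeAux

namespace CubeAux2
open CubeAux

variable (t c : ℕ) (ht : 0 < t) (hct : c ≤ t)

def Lsq : Fin c ⊕ Fin t → Fin c ⊕ Fin t → Fin c ⊕ Fin t
  | .inl u, .inl u' => .inl (u + u')
  | .inl u, .inr v' => .inr (v' + hemb t c ht hct u)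
  | .inr v, .inl u => .inr (v + phi t ⟨(t - c) + u.val, by have := u.isLt; omega⟩)
  | .inr v, .inr v' =>
    if _ : (v' - v).val < t - c then .inr (v + phi t (v' - v))
    else .inl ⟨(v' - v).val - (t - c), by have := (v' - v).isLt; omega⟩

lemma key [NeZero t] (v v' : Fin t) :
    v + phi t (v' - v) = v' + psi t (v' - v) := by
  unfold psi
  have h : v' + (phi t (v' - v) - (v' - v)) = v' - (v' - v) + phi t (v' - v) := by abel
  rw [h, sub_sub_cancel]

lemma Lsq_row_bij (hc : 0 < c) (a : Fin c ⊕ Fin t) :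
    Function.Bijective (fun b => Lsq t c ht hct a b) := by
  haveI : NeZero t := ⟨ht.ne'⟩
  haveI : NeZero c := ⟨hc.ne'⟩
  rw [← Finite.injective_iff_bijective]
  intro b1 b2 h
  match a, b1, b2 with
  | .inl u, .inl u1, .inl u2 =>
    simp only [Lsq, Sum.inl.injEq] at h
    rw [add_left_cancel h]
  | .inl u, .inl u1, .inr v2 => simp [Lsq] at h
  | .inl u, .inr v1, .inl u2 => simp [Lsq] at h
  | .inl u, .inr v1, .inr v2 =>
    simp only [Lsq, Sum.inr.injEq] at h
    rw [add_right_cancel h]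
  | .inr v, .inl u1, .inl u2 =>
    simp only [Lsq, Sum.inr.injEq] at h
    have h2 := phi_inj t (add_left_cancel h)
    have h3 := congrArg Fin.val h2
    simp only at h3
    congr 1
    exact Fin.ext (by omega)
  | .inr v, .inl u1, .inr v2 =>
    simp only [Lsq] at h
    split_ifs at h with h1
    · simp only [Sum.inr.injEq] at h
      have h2 := phi_inj t (add_left_cancel h)
      have h3 := congrArg Fin.val h2
      simp only at h3
      omega
  | .inr v, .inr v1, .inl u2 =>
    simp only [Lsq] at h
    split_ifs at h with h1
    · simp only [Sum.inr.injEq] at h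
      have h2 := phi_inj t (add_left_cancel h)
      have h3 := congrArg Fin.val h2
      simp only at h3
      omega
  | .inr v, .inr v1, .inr v2 =>
    simp only [Lsq] at h
    split_ifs at h with h1 h2 h2 <;>
      simp only [Sum.inr.injEq, Sum.inl.injEq] at h
    · have h3 := phi_inj t (add_left_cancel h)
      have h4 : v1 - v = v2 - v := h3
      have h5 := congrArg (· + v) h4
      simpa [sub_add_cancel] using h5
    · have h3 := congrArg Fin.val h
      simp only at h3
      have e1 := (v1 - v).isLt
      have e2 := (v2 - v).isLt
      have h4 : v1 - v = v2 - v := Fin.ext (by omega)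
      have h5 := congrArg (· + v) h4
      simpa [sub_add_cancel] using h5

lemma Lsq_col_bij (hc : 0 < c) (b : Fin c ⊕ Fin t) :
    Function.Bijective (fun a => Lsq t c ht hct a b) := by
  haveI : NeZero t := ⟨ht.ne'⟩
  haveI : NeZero c := ⟨hc.ne'⟩
  rw [← Finite.injective_iff_bijective]
  intro a1 a2 h
  match b, a1, a2 with
  | .inl u, .inl u1, .inl u2 =>
    simp only [Lsq, Sum.inl.injEq] at h
    rw [add_right_cancel h]
  | .inl u, .inl u1, .inr v2 => simp [Lsq] at h
  | .inl u, .inr v1, .inl u2 => simp [Lsq] at h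
  | .inl u, .inr v1, .inr v2 =>
    simp only [Lsq, Sum.inr.injEq] at h
    rw [add_right_cancel h]
  | .inr v', .inl u1, .inl u2 =>
    simp only [Lsq, Sum.inr.injEq] at h
    rw [hemb_inj t c ht hct (add_left_cancel h)]
  | .inr v', .inl u1, .inr v2 =>
    simp only [Lsq] at h
    split_ifs at h with h1
    · simp only [Sum.inr.injEq] at h
      rw [key t v2 v'] at h
      have h2 := add_left_cancel h
      exact absurd h2 (hemb_ne_psi t c hc ht hct u1 (v' - v2) h1)
  | .inr v', .inr v1, .inl u2 =>
    simp only [Lsq] at h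
    split_ifs at h with h1
    · simp only [Sum.inr.injEq] at h
      rw [key t v1 v'] at h
      have h2 := add_left_cancel h.symm
      exact absurd h2 (hemb_ne_psi t c hc ht hct u2 (v' - v1) h1)
  | .inr v', .inr v1, .inr v2 =>
    simp only [Lsq] at h
    split_ifs at h with h1 h2 h2 <;>
      simp only [Sum.inr.injEq, Sum.inl.injEq] at h
    · rw [key t v1 v', key t v2 v'] at h
      have h3 := psi_inj t c hc hct _ _ h1 h2 (add_left_cancel h)
      have h4 : v' - (v' - v1) = v' - (v' - v2) := by rw [h3]
      simpa [sub_sub_cancel] using h4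
    · have h3 := congrArg Fin.val h
      simp only at h3
      have e1 := (v' - v1).isLt
      have e2 := (v' - v2).isLt
      have h4 : v' - v1 = v' - v2 := Fin.ext (by omega)
      have h5 : v' - (v' - v1) = v' - (v' - v2) := by rw [h4]
      simpa [sub_sub_cancel] using h5

end CubeAux2

lemma main_case (t c : ℕ) (hc : 0 < c) (hct : c ≤ t) :
    ∃ C : Fin (t + c) → Fin (t + c) → Fin (t + c) → Fin (t + c),
      IsLatinCube C ∧
      ∃ (rows cols files syms : Fin c ↪ Fin (t + c))
        (S : Fin c → Fin c → Fin c → Fin c),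
        IsLatinCube S ∧
        ∀ x y z, C (rows x) (cols y) (files z) = syms (S x y z) := by
  have ht : 0 < t := lt_of_lt_of_le hc hct
  haveI : NeZero t := ⟨ht.ne'⟩
  haveI : NeZero c := ⟨hc.ne'⟩
  set E : Fin c ⊕ Fin t ≃ Fin (t + c) := (Equiv.sumComm (Fin c) (Fin t)).trans finSumFinEquiv
    with hE
  set L := CubeAux2.Lsq t c ht hct with hL
  have hrow := CubeAux2.Lsq_row_bij t c ht hct hc
  have hcol := CubeAux2.Lsq_col_bij t c ht hct hc
  refine ⟨fun i j k => E (L (L (E.symm i) (E.symm j)) (E.symm k)), ⟨?_, ?_, ?_⟩,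
    ⟨fun x => E (Sum.inl x), fun a b h => Sum.inl_injective (E.injective h)⟩,
    ⟨fun x => E (Sum.inl x), fun a b h => Sum.inl_injective (E.injective h)⟩,
    ⟨fun x => E (Sum.inl x), fun a b h => Sum.inl_injective (E.injective h)⟩,
    ⟨fun x => E (Sum.inl x), fun a b h => Sum.inl_injective (E.injective h)⟩,
    fun x y z => x + y + z, ⟨?_, ?_, ?_⟩, ?_⟩
  · intro i j
    exact E.bijective.comp ((hrow _).comp E.symm.bijective)
  · intro i k
    exact E.bijective.comp ((hcol _).comp ((hrow _).comp E.symm.bijective))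
  · intro j k
    exact E.bijective.comp ((hcol _).comp ((hcol _).comp E.symm.bijective))
  · intro x y
    exact (Equiv.addLeft (x + y)).bijective
  · intro x z
    exact ((Equiv.addLeft x).trans (Equiv.addRight z)).bijective
  · intro y z
    exact ((Equiv.addRight y).trans (Equiv.addRight z)).bijective
  · intro x y z
    simp only [Function.Embedding.coeFn_mk, Equiv.symm_apply_apply]
    show E (L (L (E.symm (E (Sum.inl x))) (E.symm (E (Sum.inl y)))) (E.symm (E (Sum.inl z)))) =
      E (Sum.inl (x + y + z))
    simp only [Equiv.symm_apply_apply]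
    rfl

/-- a latin cube of order `t+c` with a subcube of order `c` exists
iff `c ≤ t` (the case `c = t + c` being trivially true). -/
theorem cube_with_subcube_iff (t c : ℕ) :
    (∃ C : Fin (t + c) → Fin (t + c) → Fin (t + c) → Fin (t + c),
      IsLatinCube C ∧
      ∃ (rows cols files syms : Fin c ↪ Fin (t + c))
        (S : Fin c → Fin c → Fin c → Fin c),
        IsLatinCube S ∧
        ∀ x y z, C (rows x) (cols y) (files z) = syms (S x y z)) ↔
    (c ≤ t ∨ c = t + c) := by
  constructor
  · rintro ⟨C, hC, rows, cols, files, syms, S, hS, hcomp⟩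
    by_cases hc0 : c = 0
    · exact Or.inl (by omega)
    by_cases ht0 : t = 0
    · exact Or.inr (by omega)
    left
    have hc : 0 < c := Nat.pos_of_ne_zero hc0
    -- there is a file index not in the range of `files`
    have hkex : ∃ k0 : Fin (t + c), ∀ z, files z ≠ k0 := by
      by_contra hk
      push_neg at hk
      have hsurj : Function.Surjective files := fun k => hk k
      have := Fintype.card_le_of_surjective files hsurj
      simp at this
      omega
    obtain ⟨k0, hk0⟩ := hkex
    set x0 : Fin c := ⟨0, hc⟩
    -- values of C on the subcube rows/cols at file k0 avoid the subcube symbols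
    have step1 : ∀ y w : Fin c, C (rows x0) (cols y) k0 ≠ syms w := by
      intro y w h
      obtain ⟨z, hz⟩ := (hS.1 x0 y).2 w
      have heq : C (rows x0) (cols y) (files z) = C (rows x0) (cols y) k0 := by
        rw [hcomp, show S x0 y z = w from hz, h]
      exact hk0 z ((hC.1 (rows x0) (cols y)).1 heq)
    have hinj : Function.Injective (fun y : Fin c => C (rows x0) (cols y) k0) := by
      intro y1 y2 h
      exact cols.injective ((hC.2.1 (rows x0) k0).1 h)
    classical
    set A : Finset (Fin (t + c)) := Finset.univ.image (fun y : Fin c => C (rows x0) (cols y) k0) with hA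
    set B : Finset (Fin (t + c)) := Finset.univ.image syms with hB
    have hAcard : A.card = c := by
      rw [hA, Finset.card_image_of_injective _ hinj, Finset.card_univ, Fintype.card_fin]
    have hBcard : B.card = c := by
      rw [hB, Finset.card_image_of_injective _ syms.injective, Finset.card_univ, Fintype.card_fin]
    have hdisj : Disjoint A B := by
      rw [Finset.disjoint_left]
      rintro a ha hb
      rw [hA, Finset.mem_image] at ha
      rw [hB, Finset.mem_image] at hb
      obtain ⟨y, _, hy⟩ := ha
      obtain ⟨w, _, hw⟩ := hb
      exact step1 y w (by rw [hy, hw])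
    have hle : (A ∪ B).card ≤ (Finset.univ : Finset (Fin (t + c))).card :=
      Finset.card_le_card (Finset.subset_univ _)
    rw [Finset.card_union_of_disjoint hdisj, hAcard, hBcard, Finset.card_univ,
      Fintype.card_fin] at hle
    omega
  · intro h
    by_cases hc0 : c = 0
    · subst hc0
      refine ⟨fun i j k => i + j + k, ⟨?_, ?_, ?_⟩, ?_⟩
      · intro i j
        haveI : NeZero (t + 0) := ⟨(Fin.pos i).ne'⟩
        exact (Equiv.addLeft (i + j)).bijective
      · intro i k
        haveI : NeZero (t + 0) := ⟨(Fin.pos i).ne'⟩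
        exact ((Equiv.addLeft i).trans (Equiv.addRight k)).bijective
      · intro j k
        haveI : NeZero (t + 0) := ⟨(Fin.pos j).ne'⟩
        exact ((Equiv.addRight j).trans (Equiv.addRight k)).bijective
      · refine ⟨⟨fun x => x.elim0, fun x => x.elim0⟩, ⟨fun x => x.elim0, fun x => x.elim0⟩,
          ⟨fun x => x.elim0, fun x => x.elim0⟩, ⟨fun x => x.elim0, fun x => x.elim0⟩,
          fun x => x.elim0, ⟨fun i => i.elim0, fun i => i.elim0, fun _ k => k.elim0⟩,
          fun x => x.elim0⟩
    have hc : 0 < c := Nat.pos_of_ne_zero hc0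
    rcases h with h | h
    · exact main_case t c hc h
    · -- t = 0
      have ht : t = 0 := by omega
      subst ht
      set E : Fin c ≃ Fin (0 + c) := finCongr (zero_add c).symm with hE
      haveI : NeZero c := ⟨hc.ne'⟩
      refine ⟨fun i j k => E (E.symm i + E.symm j + E.symm k), ⟨?_, ?_, ?_⟩,
        E.toEmbedding, E.toEmbedding, E.toEmbedding, E.toEmbedding,
        fun x y z => x + y + z, ⟨?_, ?_, ?_⟩, ?_⟩
      · intro i j
        exact (((Equiv.addLeft (E.symm i + E.symm j)).trans E).bijective).comp E.symm.bijective
      · intro i k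
        exact ((((Equiv.addLeft (E.symm i)).trans (Equiv.addRight (E.symm k))).trans E).bijective).comp E.symm.bijective
      · intro j k
        exact ((((Equiv.addRight (E.symm j)).trans (Equiv.addRight (E.symm k))).trans E).bijective).comp E.symm.bijective
      · intro x y
        exact (Equiv.addLeft (x + y)).bijective
      · intro x z
        exact ((Equiv.addLeft x).trans (Equiv.addRight z)).bijective
      · intro y z
        exact ((Equiv.addRight y).trans (Equiv.addRight z)).bijective
      · intro x y z
        simp
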